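/- Every right invertible λ⊥-term inhabits only right types: if ⊢ λz.zM₁…Mₘ : τ → μ in the essential intersection type system, then there exist ρ₁,…,ρₘ such that τ ≤ ρ₁ → … → ρₘ → μ and each type τ → ρᵢ is inhabited. -/
import Mathlib


/-- Terms of the λ⊥-calculus (de Bruijn indices). -/
inductive Tm : Type
  | var : ℕ → Tm
  | bot : Tm
  | lam : Tm → Tm
  | app : Tm → Tm → Tm
  deriving DecidableEq

namespace Tm

/-- Lift (shift by one) all de Bruijn indices ≥ k. -/
def lift : Tm → ℕ → Tm
  | var n, k => if n < k then var n else var (n+1)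
  | bot, _ => bot
  | lam M, k => lam (lift M (k+1))
  | app M N, k => app (lift M k) (lift N k)

/-- Capture-avoiding substitution of N for variable k. -/
def subst : Tm → ℕ → Tm → Tm
  | var n, k, N => if n < k then var n else if n = k then N else var (n-1)
  | bot, _, _ => bot
  | lam M, k, N => lam (subst M (k+1) (lift N 0))
  | app M P, k, N => app (subst M k N) (subst P k N)

/-- One-step β⊥-reduction (compatible closure). -/
inductive Step : Tm → Tm → Prop
  | beta (M N : Tm) : Step (app (lam M) N) (subst M 0 N)
  | botApp (N : Tm) : Step (app bot N) bot
  | botLam : Step (lam bot) bot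
  | appL {M M'} (N) : Step M M' → Step (app M N) (app M' N)
  | appR (M) {N N'} : Step N N' → Step (app M N) (app M N')
  | lamC {M M'} : Step M M' → Step (lam M) (lam M')

/-- Multi-step reduction. -/
def Red : Tm → Tm → Prop := Relation.ReflTransGen Step

/-- β⊥-conversion: M = N iff they have a common reduct. -/
def Conv (M N : Tm) : Prop := ∃ P, Red M P ∧ Red N P

/-- The identity combinator I = λx.x. -/
def iTm : Tm := lam (var 0)

/-- Composition M ∘ N = λz.M(Nz). -/
def comp (M N : Tm) : Tm := lam (app (lift M 0) (app (lift N 0) (var 0)))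

/-- Apply M to a list of arguments. -/
def applist (M : Tm) (Ms : List Tm) : Tm := Ms.foldl app M

/-- Iterated λ-abstraction. -/
def iterLam : ℕ → Tm → Tm
  | 0, M => M
  | n+1, M => lam (iterLam n M)

/-- The selector λt x₁ … xₘ. t  (a simple right inverse). -/
def sel (m : ℕ) : Tm := iterLam (m+1) (var m)

/-- Number of initial λ-abstractions of a term. -/
def leadLams : Tm → ℕ
  | lam M => leadLams M + 1
  | _ => 0

end Tm

mutual
/-- Strict intersection types μ ::= φ | ω | σ → μ. -/
inductive STy : Type
  | tvar : ℕ → STy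
  | omega : STy
  | arrow : ITy → STy → STy
/-- Intersections σ ::= μ | σ ∧ σ. -/
inductive ITy : Type
  | strict : STy → ITy
  | inter : ITy → ITy → ITy
end

/-- The subtyping preorder on (strict) intersection types. -/
inductive SubTy : ITy → ITy → Prop
  | refl (σ) : SubTy σ σ
  | trans {σ τ ρ} : SubTy σ τ → SubTy τ ρ → SubTy σ ρ
  | toOmega (σ) : SubTy σ (.strict .omega)
  | omegaArr : SubTy (.strict .omega) (.strict (.arrow (.strict .omega) .omega))
  | interL (σ τ) : SubTy (.inter σ τ) σ
  | interR (σ τ) : SubTy (.inter σ τ) τ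
  | interMono {σ₁ σ₂ τ₁ τ₂} : SubTy σ₁ τ₁ → SubTy σ₂ τ₂ → SubTy (.inter σ₁ σ₂) (.inter τ₁ τ₂)
  | arrow {σ τ : ITy} {μ ν : STy} : SubTy τ σ → SubTy (.strict μ) (.strict ν) →
      SubTy (.strict (.arrow σ μ)) (.strict (.arrow τ ν))

/-- σ ∼ τ : mutual subtyping. -/
def EqvTy (σ τ : ITy) : Prop := SubTy σ τ ∧ SubTy τ σ

/-- μ is a conjunct (component) of the intersection σ. -/
inductive IsComp : STy → ITy → Prop
  | strict (μ) : IsComp μ (.strict μ)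
  | left {μ σ} (τ) : IsComp μ σ → IsComp μ (.inter σ τ)
  | right {μ τ} (σ) : IsComp μ τ → IsComp μ (.inter σ τ)

/-- The essential intersection type assignment system (contexts are de Bruijn lists). -/
inductive Der : List ITy → Tm → STy → Prop
  | var {Γ n σ μ} : Γ[n]? = some σ → IsComp μ σ → Der Γ (.var n) μ
  | omega (Γ M) : Der Γ M .omega
  | sub {Γ M μ ν} : Der Γ M μ → SubTy (.strict μ) (.strict ν) → Der Γ M ν
  | lam {Γ M σ μ} : Der (σ :: Γ) M μ → Der Γ (.lam M) (.arrow σ μ)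
  | app {Γ M N σ μ} : Der Γ M (.arrow σ μ) → (∀ ν, IsComp ν σ → Der Γ N ν) →
      Der Γ (.app M N) μ

/-- A strict type is inhabited if some closed term has it. -/
def InhabS (μ : STy) : Prop := ∃ M, Der [] M μ

/-- An intersection is inhabited if a single closed term has all its conjuncts. -/
def InhabI (σ : ITy) : Prop := ∃ M, ∀ μ, IsComp μ σ → Der [] M μ

/-- σ → ρ is inhabited: one term inhabits σ → μ for every conjunct μ of ρ. -/
def InhabArrow (σ ρ : ITy) : Prop := ∃ M, ∀ μ, IsComp μ ρ → Der [] M (.arrow σ μ)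

/-- ρ₁ → … → ρₘ → μ. -/
def arrows (l : List ITy) (μ : STy) : STy := l.foldr .arrow μ

/-- μ ◁ ν : μ is a retract of ν. -/
def Retract (μ ν : STy) : Prop :=
  ∃ L R, Der [] L (.arrow (.strict ν) μ) ∧ Der [] R (.arrow (.strict μ) ν) ∧
    Tm.Conv (Tm.comp L R) Tm.iTm

/-! ### Auxiliary development -/

/-- A strict type equivalent to ω: ω itself or an arrow with trivial codomain. -/
inductive Triv : STy → Prop
  | omega : Triv .omega
  | arrow (σ) {ν} : Triv ν → Triv (.arrow σ ν)

/-- Every intersection has at least one conjunct. -/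
theorem ri_comp_exists : ∀ σ : ITy, ∃ γ, IsComp γ σ
  | .strict μ => ⟨μ, .strict μ⟩
  | .inter σ τ =>
      let ⟨γ, hγ⟩ := ri_comp_exists σ
      ⟨γ, .left _ hγ⟩

/-- An intersection is a subtype of each of its conjuncts. -/
theorem ri_comp_sub {γ : STy} {τ : ITy} (h : IsComp γ τ) : SubTy τ (.strict γ) := by
  induction h with
  | strict => exact SubTy.refl _
  | left τ h ih => exact (SubTy.interL _ _).trans ih
  | right σ h ih => exact (SubTy.interR _ _).trans ih

/-- ω is below every trivial type. -/
theorem ri_triv_sub {ν : STy} (h : Triv ν) : SubTy (.strict .omega) (.strict ν) := by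
  induction h with
  | omega => exact SubTy.refl _
  | arrow σ h ih => exact SubTy.omegaArr.trans (SubTy.arrow (SubTy.toOmega σ) ih)

/-- Anything below a strict type is strict. -/
theorem ri_strict_sub {a b : ITy} (h : SubTy a b) :
    ∀ μ, a = .strict μ → ∃ ν, b = .strict ν := by
  induction h with
  | refl σ => exact fun μ h => ⟨μ, h⟩
  | trans h1 h2 ih1 ih2 =>
      intro μ h
      obtain ⟨ν, hb⟩ := ih1 μ h
      exact ih2 ν hb
  | toOmega σ => exact fun μ h => ⟨_, rfl⟩
  | omegaArr => exact fun μ h => ⟨_, rfl⟩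
  | interL σ τ => intro μ h; exact ITy.noConfusion h
  | interR σ τ => intro μ h; exact ITy.noConfusion h
  | interMono h1 h2 ih1 ih2 => intro μ h; exact ITy.noConfusion h
  | arrow h1 h2 ih1 ih2 => exact fun μ h => ⟨_, rfl⟩

/-- Subtyping preserves triviality (keyed form). -/
theorem ri_subTriv_aux {a b : ITy} (h : SubTy a b) :
    ∀ μ ν, a = .strict μ → b = .strict ν → Triv μ → Triv ν := by
  induction h with
  | refl σ =>
      intro μ ν ha hb ht
      rw [ha] at hb
      injection hb with h'
      exact h' ▸ ht
  | trans h1 h2 ih1 ih2 =>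
      intro μ ν ha hb ht
      obtain ⟨κ, hκ⟩ := ri_strict_sub h1 μ ha
      exact ih2 κ ν hκ hb (ih1 μ κ ha hκ ht)
  | toOmega σ =>
      intro μ ν ha hb ht
      injection hb with h'
      exact h' ▸ Triv.omega
  | omegaArr =>
      intro μ ν ha hb ht
      injection hb with h'
      exact h' ▸ Triv.arrow _ Triv.omega
  | interL σ τ => intro μ ν ha; exact ITy.noConfusion ha
  | interR σ τ => intro μ ν ha; exact ITy.noConfusion ha
  | interMono h1 h2 ih1 ih2 => intro μ ν ha; exact ITy.noConfusion ha
  | arrow h1 h2 ih1 ih2 =>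
      intro μ ν ha hb ht
      injection ha with ha'
      injection hb with hb'
      subst ha' hb'
      cases ht with
      | arrow _ hν => exact Triv.arrow _ (ih2 _ _ rfl rfl hν)

theorem ri_subTriv {μ ν : STy} (h : SubTy (.strict μ) (.strict ν)) (ht : Triv μ) : Triv ν :=
  ri_subTriv_aux h μ ν rfl rfl ht

/-- Structural information extracted from strict subtyping. -/
def RS : STy → STy → Prop
  | .tvar m, .tvar n => m = n
  | .arrow σ μ₀, .arrow τ ν₀ =>
      (∀ δ, IsComp δ σ → ∃ γ, IsComp γ τ ∧ SubTy (.strict γ) (.strict δ)) ∧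
      SubTy (.strict μ₀) (.strict ν₀)
  | _, _ => False

theorem ri_rs_refl {ν : STy} (h : ¬Triv ν) : RS ν ν := by
  cases ν with
  | tvar n => rfl
  | omega => exact absurd Triv.omega h
  | arrow σ μ₀ => exact ⟨fun δ hδ => ⟨δ, hδ, SubTy.refl _⟩, SubTy.refl _⟩

theorem ri_rs_trans {a b c : STy} (h1 : RS a b) (h2 : RS b c) : RS a c := by
  cases a <;> cases b <;> cases c <;> try exact False.elim h1
  all_goals try exact False.elim h2
  · exact h1.trans h2
  · obtain ⟨f1, s1⟩ := h1
    obtain ⟨f2, s2⟩ := h2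
    refine ⟨fun δ hδ => ?_, s1.trans s2⟩
    obtain ⟨γ, hγ, hs⟩ := f1 δ hδ
    obtain ⟨γ', hγ', hs'⟩ := f2 γ hγ
    exact ⟨γ', hγ', hs'.trans hs⟩

/-- Soundness: subtyping refines to componentwise structural subtyping. -/
theorem ri_sound {a b : ITy} (h : SubTy a b) :
    ∀ ν, IsComp ν b → ¬Triv ν →
      ∃ μ, IsComp μ a ∧ SubTy (.strict μ) (.strict ν) ∧ RS μ ν := by
  induction h with
  | refl σ => exact fun ν hν hnt => ⟨ν, hν, SubTy.refl _, ri_rs_refl hnt⟩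
  | trans h1 h2 ih1 ih2 =>
      intro ν hν hnt
      obtain ⟨μ, hμ, hsub, hrs⟩ := ih2 ν hν hnt
      have hμnt : ¬Triv μ := fun ht => hnt (ri_subTriv hsub ht)
      obtain ⟨κ, hκ, hsub', hrs'⟩ := ih1 μ hμ hμnt
      exact ⟨κ, hκ, hsub'.trans hsub, ri_rs_trans hrs' hrs⟩
  | toOmega σ =>
      intro ν hν hnt
      cases hν
      exact absurd Triv.omega hnt
  | omegaArr =>
      intro ν hν hnt
      cases hν
      exact absurd (Triv.arrow _ Triv.omega) hnt
  | interL σ τ => exact fun ν hν hnt => ⟨ν, .left _ hν, SubTy.refl _, ri_rs_refl hnt⟩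
  | interR σ τ => exact fun ν hν hnt => ⟨ν, .right _ hν, SubTy.refl _, ri_rs_refl hnt⟩
  | interMono h1 h2 ih1 ih2 =>
      intro ν hν hnt
      cases hν with
      | left _ hc =>
          obtain ⟨μ, hμ, hs, hr⟩ := ih1 ν hc hnt
          exact ⟨μ, .left _ hμ, hs, hr⟩
      | right _ hc =>
          obtain ⟨μ, hμ, hs, hr⟩ := ih2 ν hc hnt
          exact ⟨μ, .right _ hμ, hs, hr⟩
  | @arrow σ τ μ ν h1 h2 ih1 ih2 =>
      intro ν' hν' hnt
      cases hν'
      refine ⟨_, .strict _, SubTy.arrow h1 h2, ?_, h2⟩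
      intro δ hδ
      by_cases ht : Triv δ
      · obtain ⟨γ, hγ⟩ := ri_comp_exists τ
        exact ⟨γ, hγ, (SubTy.toOmega _).trans (ri_triv_sub ht)⟩
      · obtain ⟨γ, hγ, hs, _⟩ := ih1 δ hδ ht
        exact ⟨γ, hγ, hs⟩

/-! ### Generation lemmas for the type system -/

theorem ri_der_var_of_sub {Γ : List ITy} {n : ℕ} {σ' : ITy} {μ : STy}
    (hg : Γ[n]? = some σ') (hs : SubTy σ' (.strict μ)) : Der Γ (.var n) μ := by
  by_cases ht : Triv μ
  · exact (Der.omega Γ _).sub (ri_triv_sub ht)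
  · obtain ⟨κ, hκ, hsub, _⟩ := ri_sound hs μ (.strict μ) ht
    exact (Der.var hg hκ).sub hsub

/-- Contexts can be strengthened componentwise. -/
theorem ri_der_ctx {Γ : List ITy} {M : Tm} {ν : STy} (h : Der Γ M ν) :
    ∀ Γ' : List ITy,
      (∀ (n : ℕ) (σ : ITy), Γ[n]? = some σ → ∃ σ', Γ'[n]? = some σ' ∧
        ∀ δ, IsComp δ σ → SubTy σ' (.strict δ)) →
      Der Γ' M ν := by
  induction h with
  | var hg hc =>
      intro Γ' H
      obtain ⟨σ', hσ', hsub⟩ := H _ _ hg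
      exact ri_der_var_of_sub hσ' (hsub _ hc)
  | omega Γ M => exact fun Γ' _ => Der.omega Γ' M
  | sub h hs ih => exact fun Γ' H => (ih Γ' H).sub hs
  | @lam Γ M σ μ h ih =>
      intro Γ' H
      refine Der.lam (ih (σ :: Γ') ?_)
      intro n ρ hρ
      cases n with
      | zero =>
          simp only [List.getElem?_cons_zero, Option.some.injEq] at hρ
          subst hρ
          refine ⟨σ, ?_, fun δ hδ => ri_comp_sub hδ⟩
          simp
      | succ n =>
          simp only [List.getElem?_cons_succ] at hρ
          obtain ⟨σ', hσ', hsub⟩ := H n ρ hρ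
          exact ⟨σ', by simpa using hσ', hsub⟩
  | app h hN ih ihN =>
      exact fun Γ' H => Der.app (ih Γ' H) (fun ν' hν' => ihN ν' hν' Γ' H)

theorem ri_gen_var {Γ : List ITy} {t : Tm} {κ : STy} (h : Der Γ t κ) :
    ∀ n, t = .var n → Triv κ ∨
      ∃ σ μ₀, Γ[n]? = some σ ∧ IsComp μ₀ σ ∧ SubTy (.strict μ₀) (.strict κ) := by
  induction h with
  | var hg hc =>
      intro n heq
      injection heq with h'
      subst h'
      exact Or.inr ⟨_, _, hg, hc, SubTy.refl _⟩
  | omega Γ M => exact fun n heq => Or.inl Triv.omega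
  | sub h hs ih =>
      intro n heq
      rcases ih n heq with ht | ⟨σ, μ₀, hg, hc, hsub⟩
      · exact Or.inl (ri_subTriv hs ht)
      · exact Or.inr ⟨σ, μ₀, hg, hc, hsub.trans hs⟩
  | lam h ih => intro n heq; exact Tm.noConfusion heq
  | app h hN ih ihN => intro n heq; exact Tm.noConfusion heq

theorem ri_gen_app {Γ : List ITy} {t : Tm} {κ : STy} (h : Der Γ t κ) :
    ∀ M N, t = .app M N → Triv κ ∨
      ∃ ρ ν, Der Γ M (.arrow ρ ν) ∧ (∀ δ, IsComp δ ρ → Der Γ N δ) ∧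
        SubTy (.strict ν) (.strict κ) := by
  induction h with
  | var hg hc => intro M N heq; exact Tm.noConfusion heq
  | omega Γ M => exact fun M N heq => Or.inl Triv.omega
  | sub h hs ih =>
      intro M N heq
      rcases ih M N heq with ht | ⟨ρ, ν, hM, hN, hsub⟩
      · exact Or.inl (ri_subTriv hs ht)
      · exact Or.inr ⟨ρ, ν, hM, hN, hsub.trans hs⟩
  | lam h ih => intro M N heq; exact Tm.noConfusion heq
  | app h hN ih ihN =>
      intro M N heq
      injection heq with h1 h2
      subst h1; subst h2
      exact Or.inr ⟨_, _, h, hN, SubTy.refl _⟩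

theorem ri_gen_lam {Γ : List ITy} {t : Tm} {κ : STy} (h : Der Γ t κ) :
    ∀ M, t = .lam M → Triv κ ∨
      ∃ σ μ₀, Der (σ :: Γ) M μ₀ ∧ SubTy (.strict (.arrow σ μ₀)) (.strict κ) := by
  induction h with
  | var hg hc => intro M heq; exact Tm.noConfusion heq
  | omega Γ M => exact fun M heq => Or.inl Triv.omega
  | sub h hs ih =>
      intro M heq
      rcases ih M heq with ht | ⟨σ, μ₀, hM, hsub⟩
      · exact Or.inl (ri_subTriv hs ht)
      · exact Or.inr ⟨σ, μ₀, hM, hsub.trans hs⟩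
  | lam h ih =>
      intro M heq
      injection heq with h1
      subst h1
      exact Or.inr ⟨_, _, h, SubTy.refl _⟩
  | app h hN ih ihN => intro M heq; exact Tm.noConfusion heq

/-! ### Arrows lemmas -/

theorem ri_arrows_append (l : List ITy) (ρ : ITy) (μ : STy) :
    arrows (l ++ [ρ]) μ = arrows l (.arrow ρ μ) := by
  simp [arrows]

theorem ri_arrows_mono {ν μ : STy} (h : SubTy (.strict ν) (.strict μ)) :
    ∀ l : List ITy, SubTy (.strict (arrows l ν)) (.strict (arrows l μ)) := by
  intro l
  induction l with
  | nil => exact h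
  | cons ρ l ih => exact SubTy.arrow (SubTy.refl ρ) ih

theorem ri_triv_arrows {μ : STy} (h : Triv μ) :
    ∀ l : List ITy, Triv (arrows l μ) := by
  intro l
  induction l with
  | nil => exact h
  | cons ρ l ih => exact Triv.arrow ρ ih

/-- Key generation lemma for `z M₁ … Mₘ` in a singleton context. -/
theorem ri_key {σ : ITy} : ∀ (Ms : List Tm) (μ' : STy),
    Der [σ] (Tm.applist (.var 0) Ms) μ' → ¬Triv μ' →
    ∃ (ρs : List ITy) (κ : STy), ρs.length = Ms.length ∧ IsComp κ σ ∧
      SubTy (.strict κ) (.strict (arrows ρs μ')) ∧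
      ∀ ρ ∈ ρs, ∃ N, ∀ δ, IsComp δ ρ → Der [σ] N δ := by
  intro Ms
  induction Ms using List.reverseRecOn with
  | nil =>
      intro μ' h hnt
      rcases ri_gen_var h 0 rfl with ht | ⟨σ₀, μ₀, hg, hc, hs⟩
      · exact absurd ht hnt
      · simp only [List.getElem?_cons_zero, Option.some.injEq] at hg
        subst hg
        exact ⟨[], μ₀, rfl, hc, hs, by simp⟩
  | append_singleton Ms N ih =>
      intro μ' h hnt
      have h' : Der [σ] (.app (Tm.applist (.var 0) Ms) N) μ' := by
        simpa [Tm.applist, List.foldl_append] using h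
      rcases ri_gen_app h' _ _ rfl with ht | ⟨ρ, ν, hM, hN, hs⟩
      · exact absurd ht hnt
      · have hnt' : ¬Triv (STy.arrow ρ ν) := by
          intro htt
          cases htt with
          | arrow _ hν => exact hnt (ri_subTriv hs hν)
        obtain ⟨ρs, κ, hlen, hκ, hsub, hin⟩ := ih _ hM hnt'
        refine ⟨ρs ++ [ρ], κ, by simp [hlen], hκ, ?_, ?_⟩
        · rw [ri_arrows_append]
          exact hsub.trans (ri_arrows_mono (SubTy.arrow (SubTy.refl ρ) hs) ρs)
        · intro ρ' hρ'
          rcases List.mem_append.1 hρ' with hmem | hmem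
          · exact hin ρ' hmem
          · have : ρ' = ρ := by simpa using hmem
            subst this
            exact ⟨N, hN⟩


/-- right invertible terms inhabit only right types. -/
theorem right_invertible_types {Ms : List Tm} {τ : ITy} {μ : STy}
    (h : Der [] (.lam (Tm.applist (.var 0) Ms)) (.arrow τ μ)) :
    ∃ ρs : List ITy, ρs.length = Ms.length ∧
      SubTy τ (.strict (arrows ρs μ)) ∧ ∀ ρ ∈ ρs, InhabArrow τ ρ := by
  by_cases htriv : Triv μ
  · refine ⟨List.replicate Ms.length (.strict .omega), by simp, ?_, ?_⟩
    · exact (SubTy.toOmega τ).trans (ri_triv_sub (ri_triv_arrows htriv _))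
    · intro ρ hρ
      have hρω : ρ = .strict .omega := List.eq_of_mem_replicate hρ
      subst hρω
      refine ⟨.lam .bot, fun δ hδ => ?_⟩
      cases hδ
      exact Der.lam (Der.omega _ _)
  · rcases ri_gen_lam h _ rfl with ht | ⟨σ, μ₀, hbody, hs⟩
    · cases ht with
      | arrow _ hν => exact absurd hν htriv
    · have hnt : ¬Triv (STy.arrow τ μ) := by
        intro ht; cases ht with | arrow _ hν => exact htriv hν
      obtain ⟨μ₁, hμ₁, _, hrs⟩ := ri_sound hs _ (.strict _) hnt
      cases hμ₁
      obtain ⟨map, hsub⟩ := hrs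
      have Hτ : ∀ δ, IsComp δ σ → SubTy τ (.strict δ) := by
        intro δ hδ
        obtain ⟨γ, hγ, hsγ⟩ := map δ hδ
        exact (ri_comp_sub hγ).trans hsγ
      have hnt₀ : ¬Triv μ₀ := fun ht => htriv (ri_subTriv hsub ht)
      obtain ⟨ρs, κ, hlen, hκ, hsubκ, hin⟩ := ri_key Ms μ₀ hbody hnt₀
      refine ⟨ρs, hlen, ?_, ?_⟩
      · exact (Hτ κ hκ).trans (hsubκ.trans (ri_arrows_mono hsub ρs))
      · intro ρ hρ
        obtain ⟨N, hN⟩ := hin ρ hρ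
        refine ⟨.lam N, fun δ hδ => Der.lam (ri_der_ctx (hN δ hδ) [τ] ?_)⟩
        intro n σ' hσ'
        cases n with
        | zero =>
            simp only [List.getElem?_cons_zero, Option.some.injEq] at hσ'
            subst hσ'
            exact ⟨τ, by simp, Hτ⟩
        | succ n => simp at hσ'
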